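/- Let N ≥ 1, let r ∈ ℝ^N (Euclidean space with the standard inner product ⟪·,·⟫) with r ≠ 0, let τ ∈ ℝ with τ ≠ 1, and let f : ℝ^N → ℝ be differentiable at r with gradient K := ∇f(r). Assume the Euler identity f(r) = ⟪K, r⟫. Then the gradient at r of the τ-normalized functional S_τ(x) = f(x)/‖x‖^τ vanishes if and only if K = 0. -/

import Mathlib

open scoped RealInnerProductSpace

/-- For `τ ≠ 1`, critical points of the τ-normalized total curvature functional
`S_τ(x) = f x / ‖x‖ ^ τ` are exactly the flat discrete quasi-Einstein metrics `K = 0`. -/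
theorem stmt_1 {N : ℕ} (hN : 1 ≤ N) (r : EuclideanSpace ℝ (Fin N)) (hr : r ≠ 0)
    (τ : ℝ) (hτ : τ ≠ 1)
    (f : EuclideanSpace ℝ (Fin N) → ℝ) (hf : DifferentiableAt ℝ f r)
    (K : EuclideanSpace ℝ (Fin N)) (hK : K = gradient f r)
    (euler : f r = ⟪K, r⟫) :
    gradient (fun x => f x / ‖x‖ ^ τ) r = 0 ↔ K = 0 := by
  have hrn : ‖r‖ ≠ 0 := norm_ne_zero_iff.mpr hr
  have hr2 : (‖r‖ ^ 2 : ℝ) ≠ 0 := pow_ne_zero 2 hrn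
  have hr2pos : (0:ℝ) < ‖r‖ ^ 2 := by positivity
  set σ : ℝ := -τ / 2 with hσ
  have hsq : HasFDerivAt (fun x : EuclideanSpace ℝ (Fin N) => ‖x‖ ^ 2) (2 • innerSL ℝ r) r := by
    simpa using (hasFDerivAt_id r).norm_sq
  have hφ : HasFDerivAt (fun x : EuclideanSpace ℝ (Fin N) => (‖x‖ ^ 2) ^ σ)
      ((σ * (‖r‖ ^ 2) ^ (σ - 1)) • (2 • innerSL ℝ r)) r :=
    hsq.rpow_const (Or.inl hr2)
  have hF : HasFDerivAt f (InnerProductSpace.toDual ℝ (EuclideanSpace ℝ (Fin N)) K) r := by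
    have := hf.hasGradientAt
    rw [← hK] at this
    exact this.hasFDerivAt
  have hg : HasFDerivAt (fun x : EuclideanSpace ℝ (Fin N) => f x * (‖x‖ ^ 2) ^ σ)
      (f r • ((σ * (‖r‖ ^ 2) ^ (σ - 1)) • (2 • innerSL ℝ r))
        + ((‖r‖ ^ 2) ^ σ) • (InnerProductSpace.toDual ℝ (EuclideanSpace ℝ (Fin N)) K)) r :=
    hF.mul hφ
  set a : ℝ := f r * (σ * (‖r‖ ^ 2) ^ (σ - 1)) * 2 with ha
  set b : ℝ := (‖r‖ ^ 2) ^ σ with hb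
  have hbne : b ≠ 0 := ne_of_gt (Real.rpow_pos_of_pos hr2pos σ)
  set V : EuclideanSpace ℝ (Fin N) := a • r + b • K with hV
  have hgrad : HasGradientAt (fun x : EuclideanSpace ℝ (Fin N) => f x * (‖x‖ ^ 2) ^ σ) V r := by
    rw [hasGradientAt_iff_hasFDerivAt]
    refine hg.congr_fderiv ?_
    ext y
    simp [hV, inner_add_left, inner_smul_left, real_inner_smul_left, ha,
      InnerProductSpace.toDual_apply_apply]
    ring
  have hfun : (fun x : EuclideanSpace ℝ (Fin N) => f x / ‖x‖ ^ τ)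
      = fun x : EuclideanSpace ℝ (Fin N) => f x * (‖x‖ ^ 2) ^ σ := by
    funext x
    have h1 : ((‖x‖ ^ 2 : ℝ)) ^ σ = ‖x‖ ^ (-τ) := by
      rw [← Real.rpow_natCast ‖x‖ 2, ← Real.rpow_mul (norm_nonneg x)]
      congr 1
      rw [hσ]; push_cast; ring
    rw [h1, Real.rpow_neg (norm_nonneg x), div_eq_mul_inv]
  have hgrad' : gradient (fun x : EuclideanSpace ℝ (Fin N) => f x / ‖x‖ ^ τ) r = V := by
    rw [hfun]
    exact hgrad.gradient
  rw [hgrad']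
  constructor
  · intro hV0
    -- take inner product with r
    have hinner : a * ‖r‖ ^ 2 + b * ⟪K, r⟫ = 0 := by
      calc a * ‖r‖ ^ 2 + b * ⟪K, r⟫
          = ⟪a • r + b • K, r⟫ := by
            rw [inner_add_left, real_inner_smul_left, real_inner_smul_left,
              real_inner_self_eq_norm_sq]
        _ = ⟪V, r⟫ := by rw [hV]
        _ = 0 := by rw [hV0, inner_zero_left]
    have hkey : (‖r‖ ^ 2 : ℝ) ^ (σ - 1) * ‖r‖ ^ 2 = b := by
      rw [hb, Real.rpow_sub_one hr2, div_mul_cancel₀ _ hr2]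
    have hir : ⟪K, r⟫ = 0 := by
      have e1 : a * ‖r‖ ^ 2 = f r * σ * 2 * b := by rw [ha, ← hkey]; ring
      have h2 : f r * σ * 2 * b + b * ⟪K, r⟫ = 0 := by linarith [hinner, e1]
      rw [euler, hσ] at h2
      have h3 : b * ⟪K, r⟫ * (1 - τ) = 0 := by linear_combination h2
      rcases mul_eq_zero.mp h3 with h4 | h4
      · rcases mul_eq_zero.mp h4 with h5 | h5
        · exact absurd h5 hbne
        · exact h5
      · exact absurd (by linarith : τ = 1) hτ
    have hfr : f r = 0 := by rw [euler, hir]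
    have ha0 : a = 0 := by rw [ha, hfr]; ring
    have : b • K = 0 := by
      have := hV0
      rw [hV, ha0, zero_smul, zero_add] at this
      exact this
    rcases smul_eq_zero.mp this with h | h
    · exact absurd h hbne
    · exact h
  · intro hK0
    have hfr : f r = 0 := by rw [euler, hK0, inner_zero_left]
    rw [hV, hK0, ha, hfr]
    simp
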